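/- The TPN system V̇_r - V_θ θ̇ = 0, V̇_θ + V_r θ̇ = λṙ₀θ̇, with θ̇ never zero, has general solution V_r(t) = A cos(θ(t) + B) + λṙ₀, V_θ(t) = -A sin(θ(t) + B) for constants A, B. -/

import Mathlib

theorem tpn_system_general_solution
    (θ Vr Vθ : ℝ → ℝ) (lam r₀' : ℝ)
    (hθ : Differentiable ℝ θ) (hθne : ∀ t, deriv θ t ≠ 0)
    (hVr : Differentiable ℝ Vr) (hVθ : Differentiable ℝ Vθ)
    (h1 : ∀ t, deriv Vr t = Vθ t * deriv θ t)
    (h2 : ∀ t, deriv Vθ t = (lam * r₀' - Vr t) * deriv θ t) :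
    ∃ A B : ℝ, ∀ t,
      Vr t = A * Real.cos (θ t + B) + lam * r₀' ∧
      Vθ t = -A * Real.sin (θ t + B) := by
  set c := lam * r₀' with hc
  have key : ∀ (P : ℝ → ℝ), (∀ t, HasDerivAt P 0 t) → ∀ t, P t = P 0 := by
    intro P hP t
    exact is_const_of_deriv_eq_zero (fun s => (hP s).differentiableAt)
      (fun s => (hP s).deriv) t 0
  have derivs : ∀ t, HasDerivAt Vr (Vθ t * deriv θ t) t ∧
      HasDerivAt Vθ ((c - Vr t) * deriv θ t) t := by
    intro t
    constructor
    · have := (hVr t).hasDerivAt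
      rwa [h1 t] at this
    · have := (hVθ t).hasDerivAt
      rwa [h2 t] at this
  have hP : ∀ t, HasDerivAt
      (fun s => (Vr s - c) * Real.cos (θ s) - Vθ s * Real.sin (θ s)) 0 t := by
    intro t
    have hθt := (hθ t).hasDerivAt
    have hcos := (Real.hasDerivAt_cos (θ t)).comp t hθt
    have hsin := (Real.hasDerivAt_sin (θ t)).comp t hθt
    have h := (((derivs t).1.sub_const c).mul hcos).sub ((derivs t).2.mul hsin)
    exact h.congr_deriv (by simp only [Function.comp]; ring)
  have hQ : ∀ t, HasDerivAt
      (fun s => (Vr s - c) * Real.sin (θ s) + Vθ s * Real.cos (θ s)) 0 t := by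
    intro t
    have hθt := (hθ t).hasDerivAt
    have hcos := (Real.hasDerivAt_cos (θ t)).comp t hθt
    have hsin := (Real.hasDerivAt_sin (θ t)).comp t hθt
    have h := (((derivs t).1.sub_const c).mul hsin).add ((derivs t).2.mul hcos)
    exact h.congr_deriv (by simp only [Function.comp]; ring)
  set C := (Vr 0 - c) * Real.cos (θ 0) - Vθ 0 * Real.sin (θ 0) with hC
  set D := (Vr 0 - c) * Real.sin (θ 0) + Vθ 0 * Real.cos (θ 0) with hD
  have hPt : ∀ t, (Vr t - c) * Real.cos (θ t) - Vθ t * Real.sin (θ t) = C :=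
    fun t => key _ hP t
  have hQt : ∀ t, (Vr t - c) * Real.sin (θ t) + Vθ t * Real.cos (θ t) = D :=
    fun t => key _ hQ t
  set z : ℂ := ⟨C, -D⟩ with hz
  refine ⟨‖z‖, z.arg, fun t => ?_⟩
  have hA1 : ‖z‖ * Real.cos z.arg = C := Complex.norm_mul_cos_arg z
  have hA2 : ‖z‖ * Real.sin z.arg = -D := Complex.norm_mul_sin_arg z
  have hpyth := Real.sin_sq_add_cos_sq (θ t)
  have e1 := hPt t
  have e2 := hQt t
  constructor
  · rw [Real.cos_add]
    linear_combination (-Real.cos (θ t)) * hA1 + Real.sin (θ t) * hA2 +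
      Real.cos (θ t) * e1 + Real.sin (θ t) * e2 - (Vr t - c) * hpyth
  · rw [Real.sin_add]
    linear_combination Real.sin (θ t) * hA1 + Real.cos (θ t) * hA2 -
      Real.sin (θ t) * e1 + Real.cos (θ t) * e2 - Vθ t * hpyth
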